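/- In the hexagonal lattice, the Voronoi cell of each lattice point is a regular hexagon, and the union ⋃_{v ∈ R₀} closedBall(v, dist(v, s)), where R₀ is the hexagonal cell of s, equals the union of the six disks centered at the vertices of the hexagon (each of radius equal to the circumradius of the hexagon). -/

import Mathlib

open Metric Real

/-- The six hexagonal-lattice neighbors of the origin, at distance `1`, angles `60°·k`. -/
noncomputable def hexNbr (i : Fin 6) : EuclideanSpace ℝ (Fin 2) :=
  !₂[Real.cos (i * (π / 3)), Real.sin (i * (π / 3))]

/-- The six vertices of the hexagonal Voronoi cell of the origin, at distance `1/√3`,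
angles `30° + 60°·k`. -/
noncomputable def hexVtx (i : Fin 6) : EuclideanSpace ℝ (Fin 2) :=
  (1 / Real.sqrt 3) • (!₂[Real.cos (π / 6 + i * (π / 3)), Real.sin (π / 6 + i * (π / 3))] :
    EuclideanSpace ℝ (Fin 2))

section helpers

lemma hc0 : (((0 : Fin 6) : ℕ) : ℝ) = 0 := by rw [show ((0:Fin 6):ℕ) = 0 from rfl]; norm_num
lemma hc1 : (((1 : Fin 6) : ℕ) : ℝ) = 1 := by rw [show ((1:Fin 6):ℕ) = 1 from rfl]; norm_num
lemma hc2 : (((2 : Fin 6) : ℕ) : ℝ) = 2 := by rw [show ((2:Fin 6):ℕ) = 2 from rfl]; norm_num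
lemma hc3 : (((3 : Fin 6) : ℕ) : ℝ) = 3 := by rw [show ((3:Fin 6):ℕ) = 3 from rfl]; norm_num
lemma hc4 : (((4 : Fin 6) : ℕ) : ℝ) = 4 := by rw [show ((4:Fin 6):ℕ) = 4 from rfl]; norm_num
lemma hc5 : (((5 : Fin 6) : ℕ) : ℝ) = 5 := by rw [show ((5:Fin 6):ℕ) = 5 from rfl]; norm_num

lemma hsq3 : Real.sqrt 3 ^ 2 = 3 := Real.sq_sqrt (by norm_num)
lemma hne3 : Real.sqrt 3 ≠ 0 := by positivity

lemma nbr00 : hexNbr 0 0 = 1 := by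
  show Real.cos _ = _
  rw [hc0, show (0:ℝ) * (π/3) = 0 by ring, Real.cos_zero]
lemma nbr01 : hexNbr 0 1 = 0 := by
  show Real.sin _ = _
  rw [hc0, show (0:ℝ) * (π/3) = 0 by ring, Real.sin_zero]
lemma nbr10 : hexNbr 1 0 = 1/2 := by
  show Real.cos _ = _
  rw [hc1, show (1:ℝ) * (π/3) = π/3 by ring, Real.cos_pi_div_three]
lemma nbr11 : hexNbr 1 1 = Real.sqrt 3 / 2 := by
  show Real.sin _ = _
  rw [hc1, show (1:ℝ) * (π/3) = π/3 by ring, Real.sin_pi_div_three]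
lemma nbr20 : hexNbr 2 0 = -(1/2) := by
  show Real.cos _ = _
  rw [hc2, show (2:ℝ) * (π/3) = π - π/3 by ring, Real.cos_pi_sub, Real.cos_pi_div_three]
lemma nbr21 : hexNbr 2 1 = Real.sqrt 3 / 2 := by
  show Real.sin _ = _
  rw [hc2, show (2:ℝ) * (π/3) = π - π/3 by ring, Real.sin_pi_sub, Real.sin_pi_div_three]
lemma nbr30 : hexNbr 3 0 = -1 := by
  show Real.cos _ = _
  rw [hc3, show (3:ℝ) * (π/3) = π by ring, Real.cos_pi]
lemma nbr31 : hexNbr 3 1 = 0 := by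
  show Real.sin _ = _
  rw [hc3, show (3:ℝ) * (π/3) = π by ring, Real.sin_pi]
lemma nbr40 : hexNbr 4 0 = -(1/2) := by
  show Real.cos _ = _
  rw [hc4, show (4:ℝ) * (π/3) = π + π/3 by ring, Real.cos_add, Real.cos_pi, Real.sin_pi,
    Real.cos_pi_div_three, Real.sin_pi_div_three]
  ring
lemma nbr41 : hexNbr 4 1 = -(Real.sqrt 3 / 2) := by
  show Real.sin _ = _
  rw [hc4, show (4:ℝ) * (π/3) = π + π/3 by ring, Real.sin_add, Real.cos_pi, Real.sin_pi,
    Real.cos_pi_div_three, Real.sin_pi_div_three]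
  ring
lemma nbr50 : hexNbr 5 0 = 1/2 := by
  show Real.cos _ = _
  rw [hc5, show (5:ℝ) * (π/3) = 2*π - π/3 by ring, Real.cos_two_pi_sub, Real.cos_pi_div_three]
lemma nbr51 : hexNbr 5 1 = -(Real.sqrt 3 / 2) := by
  show Real.sin _ = _
  rw [hc5, show (5:ℝ) * (π/3) = 2*π - π/3 by ring, Real.sin_sub, Real.sin_two_pi,
    Real.cos_two_pi, Real.cos_pi_div_three, Real.sin_pi_div_three]
  ring

lemma vtx00 : hexVtx 0 0 = 1/2 := by
  show 1 / Real.sqrt 3 * Real.cos _ = _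
  rw [hc0, show π/6 + (0:ℝ) * (π/3) = π/6 by ring, Real.cos_pi_div_six]
  have := hne3; field_simp
  try linarith [hsq3]
lemma vtx01 : hexVtx 0 1 = Real.sqrt 3 / 6 := by
  show 1 / Real.sqrt 3 * Real.sin _ = _
  rw [hc0, show π/6 + (0:ℝ) * (π/3) = π/6 by ring, Real.sin_pi_div_six]
  have := hne3; field_simp
  try linarith [hsq3]
lemma vtx10 : hexVtx 1 0 = 0 := by
  show 1 / Real.sqrt 3 * Real.cos _ = _
  rw [hc1, show π/6 + (1:ℝ) * (π/3) = π/2 by ring, Real.cos_pi_div_two, mul_zero]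
lemma vtx11 : hexVtx 1 1 = Real.sqrt 3 / 3 := by
  show 1 / Real.sqrt 3 * Real.sin _ = _
  rw [hc1, show π/6 + (1:ℝ) * (π/3) = π/2 by ring, Real.sin_pi_div_two]
  have := hne3; field_simp
  try linarith [hsq3]
lemma vtx20 : hexVtx 2 0 = -(1/2) := by
  show 1 / Real.sqrt 3 * Real.cos _ = _
  rw [hc2, show π/6 + (2:ℝ) * (π/3) = π - π/6 by ring, Real.cos_pi_sub, Real.cos_pi_div_six]
  have := hne3; field_simp
  try linarith [hsq3]
lemma vtx21 : hexVtx 2 1 = Real.sqrt 3 / 6 := by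
  show 1 / Real.sqrt 3 * Real.sin _ = _
  rw [hc2, show π/6 + (2:ℝ) * (π/3) = π - π/6 by ring, Real.sin_pi_sub, Real.sin_pi_div_six]
  have := hne3; field_simp
  try linarith [hsq3]
lemma vtx30 : hexVtx 3 0 = -(1/2) := by
  show 1 / Real.sqrt 3 * Real.cos _ = _
  rw [hc3, show π/6 + (3:ℝ) * (π/3) = π + π/6 by ring, Real.cos_add, Real.cos_pi, Real.sin_pi,
    Real.cos_pi_div_six, Real.sin_pi_div_six]
  have := hne3; field_simp
  try linarith [hsq3]
lemma vtx31 : hexVtx 3 1 = -(Real.sqrt 3 / 6) := by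
  show 1 / Real.sqrt 3 * Real.sin _ = _
  rw [hc3, show π/6 + (3:ℝ) * (π/3) = π + π/6 by ring, Real.sin_add, Real.cos_pi, Real.sin_pi,
    Real.cos_pi_div_six, Real.sin_pi_div_six]
  have := hne3; field_simp
  try linarith [hsq3]
lemma vtx40 : hexVtx 4 0 = 0 := by
  show 1 / Real.sqrt 3 * Real.cos _ = _
  rw [hc4, show π/6 + (4:ℝ) * (π/3) = π + π/2 by ring, Real.cos_add, Real.cos_pi, Real.sin_pi,
    Real.cos_pi_div_two, Real.sin_pi_div_two]
  ring
lemma vtx41 : hexVtx 4 1 = -(Real.sqrt 3 / 3) := by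
  show 1 / Real.sqrt 3 * Real.sin _ = _
  rw [hc4, show π/6 + (4:ℝ) * (π/3) = π + π/2 by ring, Real.sin_add, Real.cos_pi, Real.sin_pi,
    Real.cos_pi_div_two, Real.sin_pi_div_two]
  have := hne3; field_simp
  try linarith [hsq3]
lemma vtx50 : hexVtx 5 0 = 1/2 := by
  show 1 / Real.sqrt 3 * Real.cos _ = _
  rw [hc5, show π/6 + (5:ℝ) * (π/3) = 2*π - π/6 by ring, Real.cos_two_pi_sub,
    Real.cos_pi_div_six]
  have := hne3; field_simp
  try linarith [hsq3]
lemma vtx51 : hexVtx 5 1 = -(Real.sqrt 3 / 6) := by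
  show 1 / Real.sqrt 3 * Real.sin _ = _
  rw [hc5, show π/6 + (5:ℝ) * (π/3) = 2*π - π/6 by ring, Real.sin_sub, Real.sin_two_pi,
    Real.cos_two_pi, Real.cos_pi_div_six, Real.sin_pi_div_six]
  have := hne3; field_simp
  try linarith [hsq3]

lemma zeroApp0 : (0 : EuclideanSpace ℝ (Fin 2)) 0 = 0 := rfl
lemma zeroApp1 : (0 : EuclideanSpace ℝ (Fin 2)) 1 = 0 := rfl

lemma sqle (x y : EuclideanSpace ℝ (Fin 2)) {r : ℝ} (hr : 0 ≤ r) :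
    dist x y ≤ r ↔ (x 0 - y 0)^2 + (x 1 - y 1)^2 ≤ r^2 := by
  rw [EuclideanSpace.dist_eq, Fin.sum_univ_two]
  simp only [Real.dist_eq, sq_abs]
  rw [← Real.sqrt_sq hr, Real.sqrt_le_sqrt_iff (by positivity), Real.sq_sqrt (by positivity)]

lemma sqle2 (x y z : EuclideanSpace ℝ (Fin 2)) :
    dist x y ≤ dist x z ↔
      (x 0 - y 0)^2 + (x 1 - y 1)^2 ≤ (x 0 - z 0)^2 + (x 1 - z 1)^2 := by
  rw [EuclideanSpace.dist_eq, EuclideanSpace.dist_eq, Fin.sum_univ_two, Fin.sum_univ_two]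
  simp only [Real.dist_eq, sq_abs]
  rw [Real.sqrt_le_sqrt_iff (by positivity)]

lemma key6 (a e c f : ℝ) (h0 : 2*a ≤ 1) (h1 : a + e ≤ 1) (h2 : -a + e ≤ 1)
    (h3 : -(2*a) ≤ 1) (h4 : -a - e ≤ 1) (h5 : a - e ≤ 1) :
    6*(a*c) + 2*(e*f) ≤ 3*c + f ∨ 6*(a*c) + 2*(e*f) ≤ 2*f ∨
    6*(a*c) + 2*(e*f) ≤ -(3*c) + f ∨ 6*(a*c) + 2*(e*f) ≤ -(3*c) - f ∨
    6*(a*c) + 2*(e*f) ≤ -(2*f) ∨ 6*(a*c) + 2*(e*f) ≤ 3*c - f := by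
  rcases le_total 0 f with hf | hf
  · rcases le_total f (3*c) with h | h
    · exact Or.inl (by
        nlinarith [mul_nonneg (by linarith : (0:ℝ) ≤ 3*c - f) (by linarith : (0:ℝ) ≤ 1 - 2*a),
          mul_nonneg hf (by linarith : (0:ℝ) ≤ 1 - a - e)])
    · rcases le_total (-f) (3*c) with h' | h'
      · exact Or.inr (Or.inl (by
          nlinarith [mul_nonneg (by linarith : (0:ℝ) ≤ 3*c + f) (by linarith : (0:ℝ) ≤ 1 - a - e),
            mul_nonneg (by linarith : (0:ℝ) ≤ f - 3*c) (by linarith : (0:ℝ) ≤ 1 + a - e)]))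
      · exact Or.inr (Or.inr (Or.inl (by
          nlinarith [mul_nonneg hf (by linarith : (0:ℝ) ≤ 1 + a - e),
            mul_nonneg (by linarith : (0:ℝ) ≤ -(3*c) - f) (by linarith : (0:ℝ) ≤ 1 + 2*a)])))
  · rcases le_total (3*c) f with h | h
    · exact Or.inr (Or.inr (Or.inr (Or.inl (by
        nlinarith [mul_nonneg (by linarith : (0:ℝ) ≤ f - 3*c) (by linarith : (0:ℝ) ≤ 1 + 2*a),
          mul_nonneg (by linarith : (0:ℝ) ≤ -f) (by linarith : (0:ℝ) ≤ 1 + a + e)]))))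
    · rcases le_total (3*c) (-f) with h' | h'
      · exact Or.inr (Or.inr (Or.inr (Or.inr (Or.inl (by
          nlinarith [mul_nonneg (by linarith : (0:ℝ) ≤ -(3*c) - f) (by linarith : (0:ℝ) ≤ 1 + a + e),
            mul_nonneg (by linarith : (0:ℝ) ≤ 3*c - f) (by linarith : (0:ℝ) ≤ 1 - a + e)])))))
      · exact Or.inr (Or.inr (Or.inr (Or.inr (Or.inr (by
          nlinarith [mul_nonneg (by linarith : (0:ℝ) ≤ 3*c + f) (by linarith : (0:ℝ) ≤ 1 - 2*a),
            mul_nonneg (by linarith : (0:ℝ) ≤ -f) (by linarith : (0:ℝ) ≤ 1 - a + e)])))))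

set_option maxHeartbeats 2000000 in
lemma vtx_mem (i k : Fin 6) : dist (hexVtx i) 0 ≤ dist (hexVtx i) (hexNbr k) := by
  rw [sqle2, zeroApp0, zeroApp1]
  have hi : i = 0 ∨ i = 1 ∨ i = 2 ∨ i = 3 ∨ i = 4 ∨ i = 5 := by revert i; decide
  have hk : k = 0 ∨ k = 1 ∨ k = 2 ∨ k = 3 ∨ k = 4 ∨ k = 5 := by revert k; decide
  rcases hi with rfl|rfl|rfl|rfl|rfl|rfl <;> rcases hk with rfl|rfl|rfl|rfl|rfl|rfl <;>
    simp only [nbr00, nbr01, nbr10, nbr11, nbr20, nbr21, nbr30, nbr31, nbr40, nbr41,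
      nbr50, nbr51, vtx00, vtx01, vtx10, vtx11, vtx20, vtx21, vtx30, vtx31, vtx40, vtx41,
      vtx50, vtx51] <;>
    nlinarith [hsq3]

end helpers

set_option maxHeartbeats 2000000 in
/-- For the hexagonal lattice, the union of disks `closedBall v (dist v 0)` over the hexagonal
Voronoi cell `R₀` of the origin equals the union of the six disks of radius `1/√3` centered at
the vertices of the hexagon. -/
theorem stmt16 :
    (⋃ v ∈ {x : EuclideanSpace ℝ (Fin 2) | ∀ i : Fin 6, dist x 0 ≤ dist x (hexNbr i)},
        closedBall v (dist v 0)) =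
      ⋃ i : Fin 6, closedBall (hexVtx i) (1 / Real.sqrt 3) := by
  have hs : Real.sqrt 3 * Real.sqrt 3 = 3 := Real.mul_self_sqrt (by norm_num)
  have hsq := hsq3
  have hr13 : (0:ℝ) ≤ 1 / Real.sqrt 3 := by positivity
  ext x
  simp only [Set.mem_iUnion, Set.mem_setOf_eq, mem_closedBall, exists_prop]
  constructor
  · rintro ⟨v, hv, hxv⟩
    set a := v 0 with ha
    set b := v 1 with hb
    set c := x 0 with hc
    set d := x 1 with hd
    have hv' : ∀ k : Fin 6, (v 0 - hexNbr k 0)^2 + (v 1 - hexNbr k 1)^2 ≥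
        (v 0 - (0:EuclideanSpace ℝ (Fin 2)) 0)^2 + (v 1 - (0:EuclideanSpace ℝ (Fin 2)) 1)^2 :=
      fun k => (sqle2 v 0 (hexNbr k)).mp (hv k)
    have h0 : 2*a ≤ 1 := by
      have := hv' 0; rw [nbr00, nbr01, zeroApp0, zeroApp1] at this; nlinarith [this]
    have h1 : a + Real.sqrt 3 * b ≤ 1 := by
      have := hv' 1; rw [nbr10, nbr11, zeroApp0, zeroApp1] at this; nlinarith [this, hs]
    have h2 : -a + Real.sqrt 3 * b ≤ 1 := by
      have := hv' 2; rw [nbr20, nbr21, zeroApp0, zeroApp1] at this; nlinarith [this, hs]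
    have h3 : -(2*a) ≤ 1 := by
      have := hv' 3; rw [nbr30, nbr31, zeroApp0, zeroApp1] at this; nlinarith [this]
    have h4 : -a - Real.sqrt 3 * b ≤ 1 := by
      have := hv' 4; rw [nbr40, nbr41, zeroApp0, zeroApp1] at this; nlinarith [this, hs]
    have h5 : a - Real.sqrt 3 * b ≤ 1 := by
      have := hv' 5; rw [nbr50, nbr51, zeroApp0, zeroApp1] at this; nlinarith [this, hs]
    have hball : c^2 + d^2 ≤ 2*(a*c + b*d) := by
      have h' : dist v x ≤ dist v 0 := by rwa [dist_comm] at hxv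
      have := (sqle2 v x 0).mp h'
      rw [zeroApp0, zeroApp1] at this
      nlinarith [this]
    have hef : (Real.sqrt 3 * b) * (Real.sqrt 3 * d) = 3 * (b*d) := by
      rw [mul_mul_mul_comm, hs]
    rcases key6 a (Real.sqrt 3 * b) c (Real.sqrt 3 * d) h0 h1 h2 h3 h4 h5 with
      hk | hk | hk | hk | hk | hk
    · exact ⟨0, (sqle x (hexVtx 0) hr13).mpr (by
        rw [show ((1:ℝ)/Real.sqrt 3)^2 = 1/3 from by rw [div_pow, one_pow, hsq3], vtx00, vtx01]; nlinarith [hk, hball, hef, hs, hsq])⟩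
    · exact ⟨1, (sqle x (hexVtx 1) hr13).mpr (by
        rw [show ((1:ℝ)/Real.sqrt 3)^2 = 1/3 from by rw [div_pow, one_pow, hsq3], vtx10, vtx11]; nlinarith [hk, hball, hef, hs, hsq])⟩
    · exact ⟨2, (sqle x (hexVtx 2) hr13).mpr (by
        rw [show ((1:ℝ)/Real.sqrt 3)^2 = 1/3 from by rw [div_pow, one_pow, hsq3], vtx20, vtx21]; nlinarith [hk, hball, hef, hs, hsq])⟩
    · exact ⟨3, (sqle x (hexVtx 3) hr13).mpr (by
        rw [show ((1:ℝ)/Real.sqrt 3)^2 = 1/3 from by rw [div_pow, one_pow, hsq3], vtx30, vtx31]; nlinarith [hk, hball, hef, hs, hsq])⟩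
    · exact ⟨4, (sqle x (hexVtx 4) hr13).mpr (by
        rw [show ((1:ℝ)/Real.sqrt 3)^2 = 1/3 from by rw [div_pow, one_pow, hsq3], vtx40, vtx41]; nlinarith [hk, hball, hef, hs, hsq])⟩
    · exact ⟨5, (sqle x (hexVtx 5) hr13).mpr (by
        rw [show ((1:ℝ)/Real.sqrt 3)^2 = 1/3 from by rw [div_pow, one_pow, hsq3], vtx50, vtx51]; nlinarith [hk, hball, hef, hs, hsq])⟩
  · rintro ⟨i, hxi⟩
    refine ⟨hexVtx i, ?_, ?_⟩
    · exact fun k => vtx_mem i k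
    · have hd : dist (hexVtx i) 0 = 1 / Real.sqrt 3 := by
        rw [EuclideanSpace.dist_eq, Fin.sum_univ_two]
        simp only [Real.dist_eq, zeroApp0, zeroApp1, sub_zero, sq_abs]
        have hi : i = 0 ∨ i = 1 ∨ i = 2 ∨ i = 3 ∨ i = 4 ∨ i = 5 := by clear hxi; revert i; decide
        rw [show (hexVtx i 0)^2 + (hexVtx i 1)^2 = (1 / Real.sqrt 3)^2 by
          rcases hi with rfl|rfl|rfl|rfl|rfl|rfl <;>
            simp only [vtx00, vtx01, vtx10, vtx11, vtx20, vtx21, vtx30, vtx31, vtx40, vtx41,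
              vtx50, vtx51] <;>
            (rw [show ((1:ℝ)/Real.sqrt 3)^2 = 1/3 from by
              rw [div_pow, one_pow, hsq3]]; nlinarith [hs, hsq3])]
        exact Real.sqrt_sq hr13
      rw [hd]
      exact hxi
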